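/- Let Q be an acyclic cluster quiver with n vertices such that (1,2,…,n) is an admissible numbering of its vertices by sources, and for 1 ≤ k ≤ n set R^{(k)} = μ_k∘⋯∘μ_1(Q̂). Then for every 1 ≤ k ≤ n the set of green vertices of R^{(k)} is exactly {k+1,…,n}. -/

import Mathlib

/-!
Common framework: a cluster quiver `Q` with vertex set `{1,…,n}` is encoded by its
skew-symmetric adjacency matrix `B : Fin n → Fin n → ℤ`.  Extended (framed-type)
matrices are `Fin n → (Fin n ⊕ Fin n) → ℤ`, the `Sum.inr` columns being the frozen ones.
-/

namespace GreenSeq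

variable {n : ℕ}

/-- The framed quiver `Q̂ = [B | Iₙ]`. -/
def framedM (B : Fin n → Fin n → ℤ) : Fin n → (Fin n ⊕ Fin n) → ℤ :=
  fun i => Sum.elim (B i) (fun j => if i = j then 1 else 0)

/-- The coframed quiver `Q̌ = [B | −Iₙ]`. -/
def coframedM (B : Fin n → Fin n → ℤ) : Fin n → (Fin n ⊕ Fin n) → ℤ :=
  fun i => Sum.elim (B i) (fun j => if i = j then -1 else 0)

/-- Mutation of an `n × 2n` matrix at a non-frozen index `k`. -/
def mutE (R : Fin n → (Fin n ⊕ Fin n) → ℤ) (k : Fin n) : Fin n → (Fin n ⊕ Fin n) → ℤ :=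
  fun i j =>
    if i = k ∨ j = Sum.inl k then -R i j
    else R i j + max (R i (Sum.inl k)) 0 * max (R k j) 0
               - min (R i (Sum.inl k)) 0 * min (R k j) 0

/-- Iterated mutation along a list of indices (first element mutated first). -/
def mutListE (R : Fin n → (Fin n ⊕ Fin n) → ℤ) (l : List (Fin n)) :
    Fin n → (Fin n ⊕ Fin n) → ℤ :=
  l.foldl mutE R

/-- `Mut(Q̂)`: all matrices obtained from the framed quiver by finite sequences of
mutations. -/
def MutSet (B : Fin n → Fin n → ℤ) : Set (Fin n → (Fin n ⊕ Fin n) → ℤ) :=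
  {R | ∃ l : List (Fin n), R = mutListE (framedM B) l}

/-- A vertex `i` is green in `R` if the `i`-th row of the c-matrix is nonnegative. -/
def IsGreen (R : Fin n → (Fin n ⊕ Fin n) → ℤ) (i : Fin n) : Prop :=
  ∀ j : Fin n, 0 ≤ R i (Sum.inr j)

/-- A vertex `i` is red in `R` if the `i`-th row of the c-matrix is nonpositive. -/
def IsRed (R : Fin n → (Fin n ⊕ Fin n) → ℤ) (i : Fin n) : Prop :=
  ∀ j : Fin n, R i (Sum.inr j) ≤ 0

/-- A green sequence starting from the extended matrix `R`. -/
def IsGreenSeq : (Fin n → (Fin n ⊕ Fin n) → ℤ) → List (Fin n) → Prop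
  | _, [] => True
  | R, k :: l => IsGreen R k ∧ IsGreenSeq (mutE R k) l

/-- A maximal green sequence for the quiver with adjacency matrix `B`. -/
def IsMaxGreenSeq (B : Fin n → Fin n → ℤ) (l : List (Fin n)) : Prop :=
  IsGreenSeq (framedM B) l ∧ ∀ i : Fin n, IsRed (mutListE (framedM B) l) i

/-- Isomorphism of ice quivers: a permutation of the non-frozen vertices carrying `R`
to `R'` and fixing the frozen columns. -/
def IceIso (R R' : Fin n → (Fin n ⊕ Fin n) → ℤ) : Prop :=
  ∃ σ : Equiv.Perm (Fin n),
    (∀ i j : Fin n, R' (σ i) (Sum.inl (σ j)) = R i (Sum.inl j)) ∧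
    (∀ i j : Fin n, R' (σ i) (Sum.inr j) = R i (Sum.inr j))

/-- Mutation of a square exchange matrix at index `k`. -/
def mutSq (B : Fin n → Fin n → ℤ) (k : Fin n) : Fin n → Fin n → ℤ :=
  fun i j =>
    if i = k ∨ j = k then -B i j
    else B i j + max (B i k) 0 * max (B k j) 0 - min (B i k) 0 * min (B k j) 0

/-- Skew-symmetry of the adjacency matrix (the encoding of a cluster quiver). -/
def IsSkew (B : Fin n → Fin n → ℤ) : Prop := ∀ i j : Fin n, B j i = -B i j

/-- A source of the quiver with adjacency matrix `B`. -/
def IsSource (B : Fin n → Fin n → ℤ) (i : Fin n) : Prop := ∀ j : Fin n, 0 ≤ B i j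

/-- `IsSourceSeq B s`: each element of `s` is a source at the time it is mutated. -/
def IsSourceSeq : (Fin n → Fin n → ℤ) → List (Fin n) → Prop
  | _, [] => True
  | B, k :: l => IsSource B k ∧ IsSourceSeq (mutSq B k) l

/-- Acyclicity: some renumbering of the vertices makes `B` nonnegative above the
diagonal. -/
def IsAcyclic (B : Fin n → Fin n → ℤ) : Prop :=
  ∃ σ : Equiv.Perm (Fin n), ∀ i j : Fin n, σ i < σ j → 0 ≤ B i j

/-- Connectivity of the underlying unoriented graph. -/
def IsConnectedQuiver (B : Fin n → Fin n → ℤ) : Prop :=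
  (SimpleGraph.fromRel (fun i j => B i j ≠ 0)).Connected

/-- The Tits form `q(d) = Σ dᵢ² − Σ_{arrows i→j} dᵢ dⱼ` of an acyclic quiver, where the
number of arrows `i → j` is `max (B i j) 0`. -/
def TitsForm (B : Fin n → Fin n → ℤ) (d : Fin n → ℤ) : ℤ :=
  (∑ i, d i ^ 2) - ∑ i, ∑ j, max (B i j) 0 * (d i * d j)

/-- A Dynkin quiver: connected, acyclic, with positive definite Tits form. -/
def IsDynkin (B : Fin n → Fin n → ℤ) : Prop :=
  IsConnectedQuiver B ∧ IsAcyclic B ∧ ∀ d : Fin n → ℤ, d ≠ 0 → 0 < TitsForm B d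

/-- Finite cluster type: some sequence of mutations transforms `B` into the adjacency
matrix of a Dynkin quiver. -/
def FiniteClusterType (B : Fin n → Fin n → ℤ) : Prop :=
  ∃ l : List (Fin n), IsDynkin (l.foldl mutSq B)

lemma isSkew_mutSq {B : Fin n → Fin n → ℤ} (h : IsSkew B) (k : Fin n) :
    IsSkew (mutSq B k) := by
  have e1 : ∀ a : ℤ, max (-a) 0 = -min a 0 := fun a => by omega
  have e2 : ∀ a : ℤ, min (-a) 0 = -max a 0 := fun a => by omega
  intro i j
  unfold mutSq
  by_cases hc : i = k ∨ j = k
  · have hc' : j = k ∨ i = k := hc.symm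
    rw [if_pos hc', if_pos hc, h i j]
  · push_neg at hc
    rw [if_neg (by tauto), if_neg (by tauto), h i j, h k j, h i k,
      e1 (B k j), e1 (B i k), e2 (B k j), e2 (B i k)]
    ring

lemma isSourceSeq_append {B : Fin n → Fin n → ℤ} {l1 l2 : List (Fin n)}
    (h : IsSourceSeq B (l1 ++ l2)) : IsSourceSeq B l1 := by
  induction l1 generalizing B with
  | nil => trivial
  | cons k l ih => exact ⟨h.1, ih h.2⟩

/-- Main auxiliary lemma: mutating along a duplicate-free source sequence keeps the
left part equal to the square mutation and makes the c-matrix diagonal, flipping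
exactly the rows that were mutated. -/
lemma aux_main (B : Fin n → Fin n → ℤ) (ε : Fin n → ℤ) (l : List (Fin n))
    (hnd : l.Nodup) (hskew : IsSkew B) (hsrc : IsSourceSeq B l)
    (hε : ∀ i ∈ l, ε i = 1) :
    ∀ i, (∀ j, mutListE (fun i' => Sum.elim (B i') (fun j' => if i' = j' then ε i' else 0))
        l i (Sum.inl j) = (l.foldl mutSq B) i j) ∧
      (∀ j, mutListE (fun i' => Sum.elim (B i') (fun j' => if i' = j' then ε i' else 0))
        l i (Sum.inr j) = if i = j then (if i ∈ l then -1 else ε i) else 0) := by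
  induction l generalizing B ε with
  | nil => intro i; constructor <;> intro j <;> simp [mutListE]
  | cons k l ih =>
    obtain ⟨hksrc, hsrc'⟩ := hsrc
    have hknl : k ∉ l := (List.nodup_cons.mp hnd).1
    have hεk : ε k = 1 := hε k List.mem_cons_self
    -- the mutated extended matrix has the same shape
    have hstep : mutE (fun i' => Sum.elim (B i') (fun j' => if i' = j' then ε i' else 0)) k
        = (fun i' => Sum.elim ((mutSq B k) i')
            (fun j' => if i' = j' then (Function.update ε k (-1)) i' else 0)) := by
      funext i j
      rcases j with j | j
      · -- left columns
        simp only [mutE, mutSq, Sum.elim_inl]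
        by_cases h : i = k ∨ j = k
        · have : i = k ∨ (Sum.inl j : Fin n ⊕ Fin n) = Sum.inl k := by
            rcases h with h | h
            · exact Or.inl h
            · exact Or.inr (by rw [h])
          rw [if_pos this, if_pos h]
        · have : ¬(i = k ∨ (Sum.inl j : Fin n ⊕ Fin n) = Sum.inl k) := by
            rintro (h1 | h1)
            · exact h (Or.inl h1)
            · exact h (Or.inr (Sum.inl.inj h1))
          rw [if_neg this, if_neg h]
      · -- right columns
        by_cases hi : i = k
        · subst hi
          have hc : (i = i ∨ (Sum.inr j : Fin n ⊕ Fin n) = Sum.inl i) := Or.inl rfl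
          simp only [mutE, if_pos hc, Sum.elim_inr]
          by_cases hj : i = j
          · subst hj; simp [hεk]
          · simp [hj]
        · have hBik : B i k ≤ 0 := by
            have := hksrc i; have := hskew k i; omega
          have hcond : ¬(i = k ∨ (Sum.inr j : Fin n ⊕ Fin n) = Sum.inl k) := by
            rintro (h1 | h1)
            · exact hi h1
            · cases h1
          simp only [mutE, if_neg hcond, Sum.elim_inr, Sum.elim_inl]
          rw [Function.update_of_ne hi]
          have h1 : max (B i k) 0 = 0 := by omega
          have h2 : min (B i k) 0 = B i k := by omega
          have h3 : (0:ℤ) ≤ (if k = j then ε k else 0) := by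
            by_cases h : k = j
            · subst h; simp [hεk]
            · simp [h]
          rw [h1, h2]
          have h4 : min (if k = j then ε k else 0) (0:ℤ) = 0 := by omega
          rw [h4]; ring
    have hε' : ∀ i ∈ l, (Function.update ε k (-1)) i = 1 := by
      intro i hi
      rw [Function.update_of_ne (by rintro rfl; exact hknl hi)]
      exact hε i (List.mem_cons_of_mem _ hi)
    have IH := ih (mutSq B k) (Function.update ε k (-1)) (List.nodup_cons.mp hnd).2
      (isSkew_mutSq hskew k) hsrc' hε'
    intro i
    constructor
    · intro j
      have := (IH i).1 j
      simpa [mutListE, hstep] using this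
    · intro j
      have := (IH i).2 j
      simp only [mutListE] at this ⊢
      rw [List.foldl_cons, hstep, this]
      by_cases hij : i = j
      · subst hij
        by_cases hi : i = k
        · subst hi; simp [hknl, List.mem_cons]
        · rw [Function.update_of_ne hi]
          simp [List.mem_cons, hi]
      · simp [hij]

lemma mem_take_finRange (m : ℕ) (i : Fin n) :
    i ∈ (List.finRange n).take m ↔ (i : ℕ) < m := by
  constructor
  · intro h
    obtain ⟨j, hj, hji⟩ := List.getElem_of_mem h
    have hjm : j < m := lt_of_lt_of_le hj (by simp [List.length_take])
    rw [List.getElem_take] at hji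
    have : i = (⟨j, by simp [List.length_take] at hj; omega⟩ : Fin n) := by
      rw [← hji]; simp
    rw [this]
    exact hjm
  · intro h
    have hi : (i : ℕ) < ((List.finRange n).take m).length := by
      simp only [List.length_take, List.length_finRange]
      omega
    have : ((List.finRange n).take m)[(i : ℕ)] = i := by
      rw [List.getElem_take]; simp
    rw [← this]
    exact List.getElem_mem hi

/-- if `(1,…,n)` (here: the increasing enumeration of `Fin n`) is an
admissible numbering of the vertices of the acyclic quiver `Q` by sources, then the
green vertices of `R^(k) = μ_k ∘ ⋯ ∘ μ_1 (Q̂)` are exactly `{k+1,…,n}`. -/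
theorem green_vertices_along_source_numbering (n : ℕ) (B : Fin n → Fin n → ℤ)
    (hskew : IsSkew B) (hacyc : IsAcyclic B)
    (hadm : IsSourceSeq B (List.finRange n)) :
    ∀ k : Fin n, ∀ i : Fin n,
      IsGreen (mutListE (framedM B) ((List.finRange n).take (k + 1))) i ↔ k < i := by
  intro k i
  set l := (List.finRange n).take (k + 1) with hl
  have hnd : l.Nodup := (List.take_sublist _ _).nodup (List.nodup_finRange n)
  have hsrc : IsSourceSeq B l := by
    apply isSourceSeq_append (l2 := (List.finRange n).drop (k + 1))
    rw [hl, List.take_append_drop]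
    exact hadm
  have hframed : framedM B
      = (fun i' => Sum.elim (B i') (fun j' => if i' = j' then (1:ℤ) else 0)) := rfl
  have key := aux_main B (fun _ => 1) l hnd hskew hsrc (fun _ _ => rfl)
  have hmem : i ∈ l ↔ (i : ℕ) < k + 1 := mem_take_finRange _ _
  constructor
  · intro hg
    by_contra hki
    have hil : i ∈ l := hmem.mpr (by
      have : (i : ℕ) ≤ (k : ℕ) := by
        have := Fin.lt_def.not.mp hki; omega
      omega)
    have := (key i).2 i
    rw [hframed] at hg
    have hgi := hg i
    rw [this] at hgi
    simp [hil] at hgi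
  · intro hki
    have hil : i ∉ l := by
      rw [hmem]
      have := Fin.lt_def.mp hki; omega
    intro j
    rw [hframed, (key i).2 j]
    by_cases hij : i = j
    · subst hij; simp [hil]
    · simp [hij]

end GreenSeq
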